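/- Let T be the d-regular rooted tree, D ≥ 1, and P ≤ Aut(T^D) a minimal pattern subgroup with group of finite type G_P. Then the following are equivalent: (i) G_P is finite; (ii) St_P(D−1) = π_D(St_{G_P}(D−1)) is the trivial group; (iii) the restriction π_D : G_P → P is a group isomorphism (so G_P ≅ P); (iv) the Hausdorff dimension ℋ(G_P) equals 0. -/

import Mathlib

namespace TreeFT

/-- Vertices of the `d`-regular rooted tree: finite words over `Fin d`. -/
abbrev Vertex (d : ℕ) := List (Fin d)

theorem perm_apply_inv_self {α : Type*} (f : Equiv.Perm α) (x : α) : f (f⁻¹ x) = x :=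
  Equiv.apply_symm_apply f x

theorem perm_inv_apply_self {α : Type*} (f : Equiv.Perm α) (x : α) : f⁻¹ (f x) = x :=
  Equiv.symm_apply_apply f x

/-- The automorphism group of the `d`-regular rooted tree, realized as the subgroup of
permutations of the vertex set that preserve length (levels) and prefixes (adjacency). -/
def treeAut (d : ℕ) : Subgroup (Equiv.Perm (Vertex d)) where
  carrier := {g | (∀ v : Vertex d, (g v).length = v.length) ∧
      (∀ v w : Vertex d, (g (v ++ w)).take v.length = g v)}
  one_mem' := ⟨fun _ => rfl, fun _ _ => List.take_left⟩
  mul_mem' := by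
    rintro g h ⟨hg1, hg2⟩ ⟨hh1, hh2⟩
    refine ⟨fun v => by rw [Equiv.Perm.mul_apply, hg1, hh1], fun v w => ?_⟩
    have h1 : h (v ++ w) = h v ++ (h (v ++ w)).drop v.length := by
      conv_lhs => rw [← List.take_append_drop v.length (h (v ++ w))]
      rw [hh2]
    rw [Equiv.Perm.mul_apply, Equiv.Perm.mul_apply, h1]
    have h2 : v.length = (h v).length := (hh1 v).symm
    rw [h2]
    exact hg2 _ _
  inv_mem' := by
    rintro g ⟨hg1, hg2⟩
    constructor
    · intro v
      have h := hg1 (g⁻¹ v)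
      rw [perm_apply_inv_self] at h
      exact h.symm
    · intro v w
      apply g.injective
      have hlen : v.length ≤ (g⁻¹ (v ++ w)).length := by
        have h := hg1 (g⁻¹ (v ++ w))
        rw [perm_apply_inv_self] at h
        rw [← h, List.length_append]
        exact Nat.le_add_right _ _
      have h3 := hg2 ((g⁻¹ (v ++ w)).take v.length) ((g⁻¹ (v ++ w)).drop v.length)
      rw [List.take_append_drop, perm_apply_inv_self, List.length_take,
        min_eq_left hlen, List.take_left] at h3
      rw [← h3, perm_apply_inv_self]

variable {d : ℕ}

/-- `Aut(T)` as a type. -/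
abbrev TAut (d : ℕ) := ↥(treeAut d)

lemma length_apply (g : TAut d) (v : Vertex d) :
    ((g : Equiv.Perm (Vertex d)) v).length = v.length := g.2.1 v

lemma take_apply (g : TAut d) (v w : Vertex d) :
    ((g : Equiv.Perm (Vertex d)) (v ++ w)).take v.length = (g : Equiv.Perm (Vertex d)) v :=
  g.2.2 v w

lemma apply_append (g : TAut d) (v w : Vertex d) :
    (g : Equiv.Perm (Vertex d)) (v ++ w) =
      (g : Equiv.Perm (Vertex d)) v ++ ((g : Equiv.Perm (Vertex d)) (v ++ w)).drop v.length := by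
  conv_lhs => rw [← List.take_append_drop v.length ((g : Equiv.Perm (Vertex d)) (v ++ w))]
  rw [take_apply]

/-- The section `g|_v` of a tree automorphism at the vertex `v`. -/
def sect (g : TAut d) (v : Vertex d) : TAut d :=
  ⟨{ toFun := fun w => ((g : Equiv.Perm (Vertex d)) (v ++ w)).drop v.length
     invFun := fun w =>
       (((g : Equiv.Perm (Vertex d)))⁻¹ ((g : Equiv.Perm (Vertex d)) v ++ w)).drop v.length
     left_inv := by
       intro w
       show ((g : Equiv.Perm (Vertex d))⁻¹
         ((g : Equiv.Perm (Vertex d)) v ++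
           ((g : Equiv.Perm (Vertex d)) (v ++ w)).drop v.length)).drop v.length = w
       rw [← apply_append g v w, perm_inv_apply_self, List.drop_left]
     right_inv := by
       intro w
       show ((g : Equiv.Perm (Vertex d))
         (v ++ ((g : Equiv.Perm (Vertex d))⁻¹
           ((g : Equiv.Perm (Vertex d)) v ++ w)).drop v.length)).drop v.length = w
       have h2 := apply_append g⁻¹ ((g : Equiv.Perm (Vertex d)) v) w
       simp only [InvMemClass.coe_inv] at h2
       rw [perm_inv_apply_self, length_apply] at h2
       rw [← h2, perm_apply_inv_self, ← length_apply g v, List.drop_left] },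
   by
    constructor
    · intro w
      simp only [Equiv.coe_fn_mk, List.length_drop, length_apply, List.length_append]
      omega
    · intro w u
      simp only [Equiv.coe_fn_mk]
      rw [← List.append_assoc]
      have h0 : ((g : Equiv.Perm (Vertex d)) ((v ++ w) ++ u)).take (v ++ w).length
          = (g : Equiv.Perm (Vertex d)) (v ++ w) := take_apply g (v ++ w) u
      have h1 : w.length = (v.length + w.length) - v.length := by omega
      rw [h1, ← List.drop_take, ← List.length_append, h0]⟩

lemma sect_apply (g : TAut d) (v w : Vertex d) :
    ((sect g v : TAut d) : Equiv.Perm (Vertex d)) w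
      = ((g : Equiv.Perm (Vertex d)) (v ++ w)).drop v.length := rfl

lemma sect_mul (g h : TAut d) (v : Vertex d) :
    sect (g * h) v = sect g ((h : Equiv.Perm (Vertex d)) v) * sect h v := by
  apply Subtype.ext
  apply Equiv.ext
  intro w
  simp only [MulMemClass.coe_mul, Equiv.Perm.mul_apply, sect_apply]
  rw [← apply_append h v w, length_apply]

lemma sect_one (v : Vertex d) : sect (1 : TAut d) v = 1 := by
  apply Subtype.ext
  apply Equiv.ext
  intro w
  simp only [sect_apply, OneMemClass.coe_one, Equiv.Perm.coe_one, id_eq]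
  exact List.drop_left

end TreeFT
namespace TreeFT

variable {d : ℕ}

/-- The stabilizer `St(n)` of the `n`-th level: automorphisms acting trivially on the first
`n` levels of the tree. -/
def lst (d n : ℕ) : Subgroup (TAut d) where
  carrier := {g | ∀ v : Vertex d, v.length ≤ n → (g : Equiv.Perm (Vertex d)) v = v}
  one_mem' := fun _ _ => rfl
  mul_mem' := by
    intro g h hg hh v hv
    show (g : Equiv.Perm (Vertex d)) ((h : Equiv.Perm (Vertex d)) v) = v
    rw [hh v hv, hg v hv]
  inv_mem' := by
    intro g hg v hv
    show ((g : Equiv.Perm (Vertex d)))⁻¹ v = v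
    apply (g : Equiv.Perm (Vertex d)).injective
    rw [perm_apply_inv_self, hg v hv]

lemma mem_lst {g : TAut d} {n : ℕ} :
    g ∈ lst d n ↔ ∀ v : Vertex d, v.length ≤ n → (g : Equiv.Perm (Vertex d)) v = v :=
  Iff.rfl

instance lst_normal (d n : ℕ) : (lst d n).Normal := by
  constructor
  intro s hs g v hv
  show (g : Equiv.Perm (Vertex d))
    ((s : Equiv.Perm (Vertex d)) (((g : Equiv.Perm (Vertex d)))⁻¹ v)) = v
  have h1 : ((g⁻¹ : TAut d) : Equiv.Perm (Vertex d)) v = ((g : Equiv.Perm (Vertex d)))⁻¹ v := by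
    simp
  have h2 : (((g : Equiv.Perm (Vertex d)))⁻¹ v).length ≤ n := by
    rw [← h1, length_apply]; exact hv
  rw [hs _ h2, perm_apply_inv_self]

/-- `Aut(T^n)`, the automorphism group of the finite tree consisting of the first `n` levels,
realized as the quotient of `Aut(T)` by the `n`-th level stabilizer. -/
abbrev FAut (d n : ℕ) := TAut d ⧸ lst d n

/-- `π_n : Aut(T) → Aut(T^n)`, restriction to the first `n` levels. -/
def proj (d n : ℕ) : TAut d →* FAut d n := QuotientGroup.mk' (lst d n)

lemma proj_surjective (d n : ℕ) : Function.Surjective (proj d n) :=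
  QuotientGroup.mk'_surjective _

/-- The group of finite type `G_P` of depth `D` with pattern group `P ≤ Aut(T^D)`:
all tree automorphisms whose section at every vertex acts on the first `D` levels as an
element of `P`. -/
def gft (d D : ℕ) (P : Subgroup (FAut d D)) : Subgroup (TAut d) where
  carrier := {g | ∀ v : Vertex d, proj d D (sect g v) ∈ P}
  one_mem' := by
    intro v
    rw [sect_one, map_one]
    exact one_mem P
  mul_mem' := by
    intro g h hg hh v
    rw [sect_mul, map_mul]
    exact mul_mem (hg _) (hh _)
  inv_mem' := by
    intro g hg v
    have h2 : sect g (((g⁻¹ : TAut d) : Equiv.Perm (Vertex d)) v) * sect g⁻¹ v = 1 := by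
      rw [← sect_mul, mul_inv_cancel, sect_one]
    have h3 : sect g⁻¹ v = (sect g (((g⁻¹ : TAut d) : Equiv.Perm (Vertex d)) v))⁻¹ :=
      (inv_eq_of_mul_eq_one_right h2).symm
    rw [h3, map_inv]
    exact inv_mem (hg _)

lemma mem_gft {g : TAut d} {D : ℕ} {P : Subgroup (FAut d D)} :
    g ∈ gft d D P ↔ ∀ v : Vertex d, proj d D (sect g v) ∈ P := Iff.rfl

/-- `P ≤ Aut(T^D)` is a minimal pattern subgroup if `π_D(G_P) = P`. -/
def IsMinimalPattern (d D : ℕ) (P : Subgroup (FAut d D)) : Prop :=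
  (gft d D P).map (proj d D) = P

/-- A subgroup of `Aut(T)` is level-transitive if it acts transitively on every level. -/
def LevelTransitive (H : Subgroup (TAut d)) : Prop :=
  ∀ v w : Vertex d, v.length = w.length → ∃ g ∈ H, (g : Equiv.Perm (Vertex d)) v = w

/-- A subgroup of `Aut(T)` is self-similar if it contains all sections of its elements. -/
def SelfSimilar (H : Subgroup (TAut d)) : Prop :=
  ∀ g ∈ H, ∀ v : Vertex d, sect g v ∈ H

/-- A subgroup of `Aut(T)` is fractal if it is self-similar, level-transitive, and for every
vertex `v` the section map maps the stabilizer of `v` onto the whole group. -/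
def Fractal (H : Subgroup (TAut d)) : Prop :=
  SelfSimilar H ∧ LevelTransitive H ∧
    ∀ v : Vertex d, ∀ h ∈ H, ∃ k ∈ H, (k : Equiv.Perm (Vertex d)) v = v ∧ sect k v = h

/-- The geometric product `K_n` of `K` at level `n`: elements of `St(n)` all of whose sections
at level-`n` vertices lie in `K`. -/
def geom (K : Subgroup (TAut d)) (n : ℕ) : Subgroup (TAut d) where
  carrier := {g | g ∈ lst d n ∧ ∀ v : Vertex d, v.length = n → sect g v ∈ K}
  one_mem' := ⟨one_mem _, fun v _ => by rw [sect_one]; exact one_mem K⟩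
  mul_mem' := by
    rintro g h ⟨hg1, hg2⟩ ⟨hh1, hh2⟩
    refine ⟨mul_mem hg1 hh1, fun v hv => ?_⟩
    rw [sect_mul, hh1 v hv.le]
    exact mul_mem (hg2 v hv) (hh2 v hv)
  inv_mem' := by
    rintro g ⟨hg1, hg2⟩
    refine ⟨inv_mem hg1, fun v hv => ?_⟩
    have hfix : ((g⁻¹ : TAut d) : Equiv.Perm (Vertex d)) v = v :=
      (inv_mem hg1 : g⁻¹ ∈ lst d n) v hv.le
    have h2 : sect g v * sect g⁻¹ v = 1 := by
      have := sect_mul g g⁻¹ v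
      rw [mul_inv_cancel, sect_one, hfix] at this
      exact this.symm
    rw [(inv_eq_of_mul_eq_one_right h2).symm]
    exact inv_mem (hg2 v hv)

end TreeFT
namespace TreeFT

variable {d : ℕ}

/-- The congruence topology on `Aut(T)`: the topology of pointwise convergence on the vertex
set (each vertex set carrying the discrete topology); the level stabilizers `St(n)` form a
base of neighborhoods of the identity for it. -/
instance tautTopologicalSpace (d : ℕ) : TopologicalSpace (TAut d) :=
  TopologicalSpace.induced
    (fun g : TAut d => ((g : Equiv.Perm (Vertex d)) : Vertex d → Vertex d))
    (@Pi.topologicalSpace (Vertex d) (fun _ => Vertex d) (fun _ => ⊥))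

lemma isOpen_eval (d : ℕ) (v u : Vertex d) :
    IsOpen {g : TAut d | (g : Equiv.Perm (Vertex d)) v = u} := by
  letI : TopologicalSpace (Vertex d) := ⊥
  haveI : DiscreteTopology (Vertex d) := ⟨rfl⟩
  have h : IsOpen ((fun f : Vertex d → Vertex d => f v) ⁻¹' {u}) :=
    (continuous_apply (A := fun _ : Vertex d => Vertex d) v).isOpen_preimage ({u} : Set (Vertex d)) (isOpen_discrete _)
  exact isOpen_induced h

lemma isOpen_eval_mem (d : ℕ) (v : Vertex d) (s : Set (Vertex d)) :
    IsOpen {g : TAut d | (g : Equiv.Perm (Vertex d)) v ∈ s} := by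
  have h : {g : TAut d | (g : Equiv.Perm (Vertex d)) v ∈ s}
      = ⋃ u ∈ s, {g : TAut d | (g : Equiv.Perm (Vertex d)) v = u} := by
    ext g; simp
  rw [h]
  exact isOpen_biUnion fun u _ => isOpen_eval d v u

lemma continuous_into_vertex {X : Type*} [TopologicalSpace X] (f : X → Vertex d)
    (h : ∀ u : Vertex d, IsOpen (f ⁻¹' {u})) :
    @Continuous X (Vertex d) _ ⊥ f := by
  rw [continuous_def]
  intro s _
  have hs : f ⁻¹' s = ⋃ u ∈ s, f ⁻¹' {u} := by
    ext x; simp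
  rw [hs]
  exact isOpen_biUnion fun u _ => h u

instance tautContinuousMul (d : ℕ) : ContinuousMul (TAut d) := by
  constructor
  · -- continuity of multiplication
    apply continuous_induced_rng.2
    apply @continuous_pi _ _ _ _ (fun _ => (⊥ : TopologicalSpace (Vertex d)))
    intro v
    apply continuous_into_vertex
      (f := fun p : TAut d × TAut d => ((p.1 * p.2 : TAut d) : Equiv.Perm (Vertex d)) v)
    intro u
    have h : (fun p : TAut d × TAut d =>
          ((p.1 * p.2 : TAut d) : Equiv.Perm (Vertex d)) v) ⁻¹' {u}
        = ⋃ w : Vertex d, ({g : TAut d | (g : Equiv.Perm (Vertex d)) w = u} ×ˢ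
            {h : TAut d | (h : Equiv.Perm (Vertex d)) v = w}) := by
      ext p
      simp only [Set.mem_preimage, Set.mem_singleton_iff, Set.mem_iUnion, Set.mem_prod,
        Set.mem_setOf_eq]
      constructor
      · intro hp
        exact ⟨(p.2 : Equiv.Perm (Vertex d)) v, hp, rfl⟩
      · rintro ⟨w, hw1, hw2⟩
        show (p.1 : Equiv.Perm (Vertex d)) ((p.2 : Equiv.Perm (Vertex d)) v) = u
        rw [hw2]; exact hw1
    rw [h]
    exact isOpen_iUnion fun w => (isOpen_eval d w u).prod (isOpen_eval d v w)

instance tautContinuousInv (d : ℕ) : ContinuousInv (TAut d) := by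
  constructor
  · -- continuity of inversion
    apply continuous_induced_rng.2
    apply @continuous_pi _ _ _ _ (fun _ => (⊥ : TopologicalSpace (Vertex d)))
    intro v
    apply continuous_into_vertex
      (f := fun g : TAut d => ((g⁻¹ : TAut d) : Equiv.Perm (Vertex d)) v)
    intro u
    have h : (fun g : TAut d => ((g⁻¹ : TAut d) : Equiv.Perm (Vertex d)) v) ⁻¹' {u}
        = {g : TAut d | (g : Equiv.Perm (Vertex d)) u = v} := by
      ext g
      simp only [Set.mem_preimage, Set.mem_singleton_iff, Set.mem_setOf_eq,
        InvMemClass.coe_inv]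
      constructor
      · intro hg; rw [← hg, perm_apply_inv_self]
      · intro hg; rw [← hg, perm_inv_apply_self]
    rw [h]
    exact isOpen_eval d u v

instance tautTopologicalGroup (d : ℕ) : IsTopologicalGroup (TAut d) := ⟨⟩

/-- A subgroup of `Aut(T)` (viewed as a topological group with the congruence topology) is
topologically finitely generated if it contains a finitely generated dense subgroup. -/
def TopFG (H : Subgroup (TAut d)) : Prop :=
  ∃ S : Set ↥H, S.Finite ∧ Dense ((Subgroup.closure S : Subgroup ↥H) : Set ↥H)

/-- A profinite group is just-infinite if it is infinite and every nontrivial closed normal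
subgroup has finite index. -/
def JustInfinite (H : Subgroup (TAut d)) : Prop :=
  Infinite ↥H ∧ ∀ N : Subgroup ↥H, N.Normal → IsClosed (N : Set ↥H) → N ≠ ⊥ → N.index ≠ 0

/-- A profinite group is strongly complete if every subgroup of finite index is open. -/
def StronglyComplete (H : Subgroup (TAut d)) : Prop :=
  ∀ N : Subgroup ↥H, N.index ≠ 0 → IsOpen (N : Set ↥H)

end TreeFT

namespace TreeFT

open Filter

/-- The Hausdorff dimension of a (closed) subgroup `H ≤ Aut(T)`:
`ℋ(H) = liminf_n log|π_n(H)| / log|π_n(Aut(T))|`. -/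
noncomputable def hausdorffDim (d : ℕ) (H : Subgroup (TAut d)) : ℝ :=
  liminf (fun n : ℕ =>
    Real.log (Nat.card ↥(H.map (proj d n))) / Real.log (Nat.card (FAut d n))) atTop

/-- `St_P(D-1) = π_D(St_{G_P}(D-1))`. -/
def stP (d D : ℕ) (P : Subgroup (FAut d D)) : Subgroup (FAut d D) :=
  (gft d D P ⊓ lst d (D - 1)).map (proj d D)

end TreeFT

namespace TreeFT

variable {d : ℕ}

/-! ### Basic auxiliary lemmas -/

lemma apply_nil (g : TAut d) : (g : Equiv.Perm (Vertex d)) [] = [] :=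
  List.length_eq_zero_iff.mp (length_apply g [])

lemma taut_ext {g h : TAut d}
    (H : ∀ l : Vertex d, (g : Equiv.Perm (Vertex d)) l = (h : Equiv.Perm (Vertex d)) l) :
    g = h := Subtype.ext (Equiv.ext H)

lemma sect_nil (g : TAut d) : sect g [] = g :=
  taut_ext fun l => by simp [sect_apply]

lemma sect_sect (g : TAut d) (v w : Vertex d) : sect (sect g v) w = sect g (v ++ w) := by
  apply taut_ext
  intro x
  rw [sect_apply, sect_apply, sect_apply, List.drop_drop, List.append_assoc,
    List.length_append, Nat.add_comm]

lemma mem_lst_zero (g : TAut d) : g ∈ lst d 0 := by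
  intro v hv
  have hv' : v = [] := List.length_eq_zero_iff.mp (Nat.le_zero.mp hv)
  rw [hv', apply_nil]

lemma proj_eq_one_iff {n : ℕ} {a : TAut d} : proj d n a = 1 ↔ a ∈ lst d n :=
  QuotientGroup.eq_one_iff a

lemma proj_eq_iff {n : ℕ} {a b : TAut d} :
    proj d n a = proj d n b ↔ ∀ v : Vertex d, v.length ≤ n →
      (a : Equiv.Perm (Vertex d)) v = (b : Equiv.Perm (Vertex d)) v := by
  constructor
  · intro h v hv
    obtain ⟨z, hz, hmul⟩ := (QuotientGroup.mk'_eq_mk' (lst d n)).mp h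
    rw [← hmul]
    show (a : Equiv.Perm (Vertex d)) v
      = ((a : Equiv.Perm (Vertex d)) * (z : Equiv.Perm (Vertex d))) v
    rw [Equiv.Perm.mul_apply, hz v hv]
  · intro h
    apply (QuotientGroup.mk'_eq_mk' (lst d n)).mpr
    refine ⟨a⁻¹ * b, ?_, by group⟩
    intro v hv
    show ((a⁻¹ * b : TAut d) : Equiv.Perm (Vertex d)) v = v
    rw [MulMemClass.coe_mul, InvMemClass.coe_inv, Equiv.Perm.mul_apply, ← h v hv,
      perm_inv_apply_self]

lemma sect_mem_gft {D : ℕ} {P : Subgroup (FAut d D)} {g : TAut d}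
    (hg : g ∈ gft d D P) (v : Vertex d) : sect g v ∈ gft d D P := by
  intro w
  rw [sect_sect]
  exact hg _

lemma vertex_eq_of_length (hd : d ≤ 1) {v w : Vertex d} (h : v.length = w.length) : v = w := by
  apply List.ext_get h
  intro n h1 h2
  have a1 := (v.get ⟨n, h1⟩).isLt
  have a2 := (w.get ⟨n, h2⟩).isLt
  exact Fin.ext (by omega)

lemma taut_subsingleton (hd : d ≤ 1) : Subsingleton (TAut d) :=
  ⟨fun g h => taut_ext fun l =>
    vertex_eq_of_length hd ((length_apply g l).trans (length_apply h l).symm)⟩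

instance finite_len_le (n : ℕ) : Finite {l : Vertex d // l.length ≤ n} :=
  (List.finite_length_le (Fin d) n).to_subtype

instance finite_len_lt (n : ℕ) : Finite {l : Vertex d // l.length < n} :=
  (List.finite_length_lt (Fin d) n).to_subtype

/-! ### The copy construction -/

/-- Applies `g` in the subtree below each level-`m` vertex `v` with `b v = true`okay, and
the identity elsewhere. -/
def copyFun (b : Vertex d → Bool) (m : ℕ) (g : TAut d) (l : Vertex d) : Vertex d :=
  l.take m ++ if b (l.take m) then (g : Equiv.Perm (Vertex d)) (l.drop m) else l.drop m

lemma copyFun_short {b : Vertex d → Bool} {m : ℕ} {g : TAut d} {l : Vertex d}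
    (h : l.length ≤ m) : copyFun b m g l = l := by
  unfold copyFun
  rw [List.take_of_length_le h, List.drop_eq_nil_of_le h, apply_nil, ite_self, List.append_nil]

lemma copyFun_take {b : Vertex d → Bool} {m : ℕ} {g : TAut d} {l : Vertex d} :
    (copyFun b m g l).take m = l.take m := by
  rcases le_or_gt l.length m with h | h
  · rw [copyFun_short h]
  · have hlen : (l.take m).length = m := by rw [List.length_take]; omega
    unfold copyFun
    exact List.take_left' hlen

lemma copyFun_drop {b : Vertex d → Bool} {m : ℕ} {g : TAut d} {l : Vertex d} :
    (copyFun b m g l).drop m =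
      if b (l.take m) then (g : Equiv.Perm (Vertex d)) (l.drop m) else l.drop m := by
  rcases le_or_gt l.length m with h | h
  · rw [copyFun_short h, List.drop_eq_nil_of_le h, apply_nil, ite_self]
  · have hlen : (l.take m).length = m := by rw [List.length_take]; omega
    unfold copyFun
    exact List.drop_left' hlen

lemma copyFun_inv (b : Vertex d → Bool) (m : ℕ) (g : TAut d) (l : Vertex d) :
    copyFun b m g⁻¹ (copyFun b m g l) = l := by
  show (copyFun b m g l).take m ++
      (if b ((copyFun b m g l).take m)
        then ((g⁻¹ : TAut d) : Equiv.Perm (Vertex d)) ((copyFun b m g l).drop m)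
        else (copyFun b m g l).drop m) = l
  rw [copyFun_take, copyFun_drop]
  by_cases hb : b (l.take m)
  · simp only [hb, if_true, InvMemClass.coe_inv, perm_inv_apply_self,
      List.take_append_drop]
  · simp only [hb, Bool.false_eq_true, if_false, List.take_append_drop]

lemma copyFun_length (b : Vertex d → Bool) (m : ℕ) (g : TAut d) (l : Vertex d) :
    (copyFun b m g l).length = l.length := by
  unfold copyFun
  rw [List.length_append, List.length_take]
  by_cases hb : b (l.take m)
  · rw [if_pos hb, length_apply, List.length_drop]; omega
  · rw [if_neg hb, List.length_drop]; omega

lemma copyFun_prefix (b : Vertex d → Bool) (m : ℕ) (g : TAut d) (v w : Vertex d) :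
    (copyFun b m g (v ++ w)).take v.length = copyFun b m g v := by
  rcases le_or_gt v.length m with hv | hv
  · rw [copyFun_short hv]
    have e : ((copyFun b m g (v ++ w)).take m).take v.length
        = (copyFun b m g (v ++ w)).take v.length := by
      rw [List.take_take, min_eq_left hv]
    rw [← e, copyFun_take, List.take_take, min_eq_left hv, List.take_left]
  · have h1 : (v ++ w).take m = v.take m := by
      rw [List.take_append, Nat.sub_eq_zero_of_le hv.le, List.take_zero,
        List.append_nil]
    have h2 : (v ++ w).drop m = v.drop m ++ w := by
      rw [List.drop_append, Nat.sub_eq_zero_of_le hv.le, List.drop_zero]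
    have hlen : (v.take m).length = m := by rw [List.length_take]; omega
    unfold copyFun
    rw [h1, h2, List.take_append, List.take_of_length_le (by rw [hlen]; exact hv.le), hlen]
    by_cases hb : b (v.take m)
    · rw [if_pos hb, if_pos hb]
      congr 1
      have := take_apply g (v.drop m) w
      rwa [List.length_drop] at this
    · rw [if_neg hb, if_neg hb]
      congr 1
      exact List.take_left' (by rw [List.length_drop])

/-- The tree automorphism acting as `g` below every level-`m` vertex selected by `b`. -/
def copyE (b : Vertex d → Bool) (m : ℕ) (g : TAut d) : TAut d :=
  ⟨{ toFun := copyFun b m g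
     invFun := copyFun b m g⁻¹
     left_inv := copyFun_inv b m g
     right_inv := fun l => by
       have := copyFun_inv b m g⁻¹ l
       rwa [inv_inv] at this },
   ⟨fun l => copyFun_length b m g l, fun v w => copyFun_prefix b m g v w⟩⟩

lemma copyE_apply (b : Vertex d → Bool) (m : ℕ) (g : TAut d) (l : Vertex d) :
    ((copyE b m g : TAut d) : Equiv.Perm (Vertex d)) l = copyFun b m g l := rfl

lemma copyE_mem_lst {j : ℕ} {g : TAut d} (hg : g ∈ lst d j) (b : Vertex d → Bool) (m : ℕ) :
    copyE b m g ∈ lst d (m + j) := by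
  intro l hl
  rw [copyE_apply]
  unfold copyFun
  have : (g : Equiv.Perm (Vertex d)) (l.drop m) = l.drop m :=
    hg _ (by rw [List.length_drop]; omega)
  rw [this, ite_self, List.take_append_drop]

lemma copyE_append {b : Vertex d → Bool} {m : ℕ} {g : TAut d} {v : Vertex d}
    (hv : v.length = m) (w : Vertex d) :
    ((copyE b m g : TAut d) : Equiv.Perm (Vertex d)) (v ++ w)
      = v ++ if b v then (g : Equiv.Perm (Vertex d)) w else w := by
  rw [copyE_apply]
  unfold copyFun
  rw [List.take_left' hv, List.drop_left' hv]

lemma copyE_mem_gft {D : ℕ} {P : Subgroup (FAut d D)} (hD : 1 ≤ D) {g : TAut d}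
    (hg : g ∈ gft d D P) (hg' : g ∈ lst d (D - 1)) (b : Vertex d → Bool) (m : ℕ) :
    copyE b m g ∈ gft d D P := by
  intro u
  rcases lt_or_ge u.length m with hu | hu
  · have hmem : sect (copyE b m g) u ∈ lst d D := by
      intro w hw
      rw [sect_apply]
      have : ((copyE b m g : TAut d) : Equiv.Perm (Vertex d)) (u ++ w) = u ++ w :=
        copyE_mem_lst hg' b m _ (by rw [List.length_append]; omega)
      rw [this, List.drop_left]
    rw [proj_eq_one_iff.mpr hmem]
    exact one_mem P
  · have e1 : ∀ w : Vertex d, u ++ w = u.take m ++ (u.drop m ++ w) := by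
      intro w
      rw [← List.append_assoc, List.take_append_drop]
    have hlen : (u.take m).length = m := by rw [List.length_take]; omega
    by_cases hb : b (u.take m)
    · have hs : sect (copyE b m g) u = sect g (u.drop m) := by
        apply taut_ext
        intro w
        rw [sect_apply, sect_apply, e1 w, copyE_append hlen, if_pos hb,
          List.drop_append, List.drop_eq_nil_of_le (by rw [hlen]; exact hu),
          List.nil_append, hlen, List.length_drop]
      rw [hs]
      exact hg (u.drop m)
    · have hs : sect (copyE b m g) u = 1 := by
        apply taut_ext
        intro w
        rw [sect_apply, e1 w, copyE_append hlen, if_neg hb, ← e1 w, List.drop_left]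
        rfl
      rw [hs, map_one]
      exact one_mem P

end TreeFT
namespace TreeFT

variable {d : ℕ}

/-! ### The root swap automorphism -/

def rsFun (x y : Fin d) : Vertex d → Vertex d
  | [] => []
  | a :: r => Equiv.swap x y a :: r

lemma rsFun_inv (x y : Fin d) (l : Vertex d) : rsFun x y (rsFun x y l) = l := by
  cases l <;> simp [rsFun, Equiv.swap_apply_self]

def rootSwap (x y : Fin d) : TAut d :=
  ⟨{ toFun := rsFun x y
     invFun := rsFun x y
     left_inv := rsFun_inv x y
     right_inv := rsFun_inv x y },
   ⟨by intro v; cases v <;> simp [rsFun],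
    by
      intro v w
      cases v with
      | nil => simp [rsFun]
      | cons a r =>
        show (rsFun x y ((a :: r) ++ w)).take (a :: r).length = rsFun x y (a :: r)
        rw [List.cons_append]
        show (Equiv.swap x y a :: (r ++ w)).take (r.length + 1) = Equiv.swap x y a :: r
        rw [List.take_succ_cons, List.take_left]⟩⟩

lemma rootSwap_apply_cons (x y a : Fin d) (l : Vertex d) :
    ((rootSwap x y : TAut d) : Equiv.Perm (Vertex d)) (a :: l) = Equiv.swap x y a :: l := rfl

/-! ### Finiteness and cardinality of `FAut` -/

lemma card_faut_le_of {n : ℕ} {β : Type*} [Finite β] (F : TAut d → β)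
    (hF : ∀ a b : TAut d, F a = F b → proj d n a = proj d n b) :
    Nat.card (FAut d n) ≤ Nat.card β := by
  apply Nat.card_le_card_of_injective (F ∘ Function.surjInv (proj_surjective d n))
  intro x y hxy
  have := hF _ _ hxy
  rwa [Function.surjInv_eq (proj_surjective d n), Function.surjInv_eq (proj_surjective d n)]
    at this

instance faut_finite (d n : ℕ) : Finite (FAut d n) := by
  apply Finite.of_injective
    (f := (fun g : TAut d => fun v : {l : Vertex d // l.length ≤ n} =>
      (⟨(g : Equiv.Perm (Vertex d)) v.1, by rw [length_apply]; exact v.2⟩ :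
        {l : Vertex d // l.length ≤ n})) ∘ Function.surjInv (proj_surjective d n))
  intro x y hxy
  have key : proj d n (Function.surjInv (proj_surjective d n) x)
      = proj d n (Function.surjInv (proj_surjective d n) y) := by
    apply proj_eq_iff.mpr
    intro v hv
    have := congrFun hxy ⟨v, hv⟩
    exact congrArg Subtype.val this
  rwa [Function.surjInv_eq (proj_surjective d n), Function.surjInv_eq (proj_surjective d n)]
    at key

lemma card_len_lt (hd : 2 ≤ d) (n : ℕ) :
    Nat.card {l : Vertex d // l.length < n} ≤ d ^ n := by
  have hcod : Nat.card (Fin n → Fin d) = d ^ n := by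
    simp [Nat.card_fun, Nat.card_eq_fintype_card]
  rw [← hcod]
  apply Nat.card_le_card_of_injective
    (f := fun l : {l : Vertex d // l.length < n} => fun i : Fin n =>
      if h : i.1 < l.1.length then l.1.get ⟨i.1, h⟩
      else if i.1 = l.1.length then (⟨0, by omega⟩ : Fin d) else ⟨1, by omega⟩)
  intro l l' hE
  have hlen : l.1.length = l'.1.length := by
    by_contra hne
    rcases lt_or_gt_of_ne hne with hlt | hgt
    · have := congrFun hE ⟨l'.1.length, l'.2⟩
      simp only [dif_neg (by omega : ¬(l'.1.length < l.1.length)),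
        if_neg (by omega : ¬(l'.1.length = l.1.length)),
        dif_neg (by omega : ¬(l'.1.length < l'.1.length))] at this
      simp [Fin.ext_iff] at this
    · have := congrFun hE ⟨l.1.length, l.2⟩
      simp only [dif_neg (by omega : ¬(l.1.length < l.1.length)),
        dif_neg (by omega : ¬(l.1.length < l'.1.length)),
        if_neg (by omega : ¬(l.1.length = l'.1.length))] at this
      simp [Fin.ext_iff] at this
  apply Subtype.ext
  apply List.ext_get hlen
  intro i h1 h2
  have := congrFun hE ⟨i, lt_trans h1 l.2⟩
  simp only [] at this
  rwa [dif_pos h1, dif_pos h2] at this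

lemma card_len_le_one (hd : 2 ≤ d) :
    Nat.card {l : Vertex d // l.length ≤ 1} ≤ d ^ 2 := by
  have e : Nat.card {l : Vertex d // l.length ≤ 1}
      = Nat.card {l : Vertex d // l.length < 2} :=
    Nat.card_congr (Equiv.subtypeEquivRight fun l => by omega)
  rw [e]
  exact card_len_lt hd 2

lemma card_faut_le (hd : 2 ≤ d) (n : ℕ) :
    Nat.card (FAut d n) ≤ (d ^ (2 * d)) ^ d ^ n := by
  have step : Nat.card (FAut d n) ≤
      Nat.card ({v : Vertex d // v.length < n} → Fin d → {w : Vertex d // w.length ≤ 1}) := by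
    apply card_faut_le_of
      (F := fun g => fun v : {v : Vertex d // v.length < n} => fun a : Fin d =>
        (⟨((g : Equiv.Perm (Vertex d)) (v.1 ++ [a])).drop v.1.length, by
          rw [List.length_drop, length_apply, List.length_append, List.length_singleton]
          omega⟩ : {w : Vertex d // w.length ≤ 1}))
    intro a b hab
    apply proj_eq_iff.mpr
    intro x
    induction x using List.reverseRecOn with
    | nil => intro _; rw [apply_nil, apply_nil]
    | append_singleton y c IH =>
      intro hlen
      rw [List.length_append, List.length_singleton] at hlen
      have hy : y.length < n := by omega
      have h1 := congrFun (congrFun hab ⟨y, hy⟩) c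
      have h2 : ((a : Equiv.Perm (Vertex d)) (y ++ [c])).drop y.length
          = ((b : Equiv.Perm (Vertex d)) (y ++ [c])).drop y.length :=
        congrArg Subtype.val h1
      rw [apply_append a y [c], apply_append b y [c], IH (by omega), h2]
  refine step.trans ?_
  have c1 : Nat.card (Fin d → {w : Vertex d // w.length ≤ 1}) ≤ d ^ (2 * d) := by
    rw [Nat.card_fun]
    have : (d ^ (2 * d)) = (d ^ 2) ^ d := by rw [← pow_mul, mul_comm]
    rw [this]
    have hb : Nat.card (Fin d) = d := by simp
    rw [hb]
    exact Nat.pow_le_pow_left (card_len_le_one hd) d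
  rw [Nat.card_fun]
  calc Nat.card (Fin d → {w : Vertex d // w.length ≤ 1}) ^ Nat.card {v : Vertex d // v.length < n}
      ≤ (d ^ (2 * d)) ^ Nat.card {v : Vertex d // v.length < n} :=
        Nat.pow_le_pow_left c1 _
    _ ≤ (d ^ (2 * d)) ^ d ^ n :=
        Nat.pow_le_pow_right (Nat.one_le_two_pow.trans (by
          have : (2:ℕ) ^ (2*d) ≤ d ^ (2*d) := Nat.pow_le_pow_left hd _
          exact this)) (card_len_lt hd n)

lemma card_faut_ge (hd : 2 ≤ d) (n : ℕ) : n + 1 ≤ Nat.card (FAut d n) := by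
  set z0 : Fin d := ⟨0, by omega⟩ with hz0
  set z1 : Fin d := ⟨1, by omega⟩ with hz1
  set τ : TAut d := rootSwap z0 z1 with hτ
  set F : Fin (n + 1) → FAut d n := fun k =>
    if k.1 < n then proj d n (copyE (fun _ => true) k.1 τ) else 1 with hF
  have hval : ∀ j : ℕ, ((copyE (fun _ => true) j τ : TAut d) : Equiv.Perm (Vertex d))
      (List.replicate j z0 ++ [z0]) = List.replicate j z0 ++ [z1] := by
    intro j
    rw [copyE_append (List.length_replicate : (List.replicate j z0).length = j), if_pos rfl]
    congr 1
  have hfix : ∀ j k : ℕ, j < k → ((copyE (fun _ => true) k τ : TAut d) :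
      Equiv.Perm (Vertex d)) (List.replicate j z0 ++ [z0]) = List.replicate j z0 ++ [z0] := by
    intro j k hjk
    have := copyE_mem_lst (mem_lst_zero τ) (fun _ => true) k
    rw [Nat.add_zero] at this
    exact this _ (by rw [List.length_append, List.length_replicate, List.length_singleton]; omega)
  have hne1 : ∀ j : ℕ, (List.replicate j z0 ++ [z1] : Vertex d) ≠ List.replicate j z0 ++ [z0] := by
    intro j h
    have h2 := List.append_cancel_left h
    have h3 : z1 = z0 := by
      simpa using h2
    rw [hz0, hz1] at h3
    exact absurd (congrArg Fin.val h3) (by norm_num)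
  have main : ∀ a b : Fin (n + 1), a.1 < b.1 → F a ≠ F b := by
    intro a b hab hFab
    have ha : a.1 < n := by omega
    have hxlen : (List.replicate a.1 z0 ++ [z0] : Vertex d).length ≤ n := by
      rw [List.length_append, List.length_replicate, List.length_singleton]; omega
    by_cases hb : b.1 < n
    · rw [hF] at hFab
      simp only [if_pos ha, if_pos hb] at hFab
      have := proj_eq_iff.mp hFab _ hxlen
      rw [hval, hfix _ _ hab] at this
      exact hne1 a.1 this
    · rw [hF] at hFab
      simp only [if_pos ha, if_neg hb] at hFab
      have hl : copyE (fun _ => true) a.1 τ ∈ lst d n := proj_eq_one_iff.mp hFab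
      have := hl _ hxlen
      rw [hval] at this
      exact hne1 a.1 this
  have hinj : Function.Injective F := by
    intro a b hFab
    by_contra hne'
    have : a.1 ≠ b.1 := fun h => hne' (Fin.ext h)
    rcases this.lt_or_gt with h | h
    · exact main a b h hFab
    · exact main b a h hFab.symm
  calc n + 1 = Nat.card (Fin (n + 1)) := by simp
    _ ≤ Nat.card (FAut d n) := Nat.card_le_card_of_injective F hinj

end TreeFT
namespace TreeFT

open Filter

/-- Let `P ≤ Aut(T^D)` be a minimal pattern subgroup with group of finite
type `G_P`.  Then the following are equivalent: (i) `G_P` is finite; (ii) `St_P(D−1)` is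
trivial; (iii) `π_D` restricts to a group isomorphism `G_P → P`; (iv) `ℋ(G_P) = 0`. -/
theorem statement_13 (d D : ℕ) (hD : 1 ≤ D) (P : Subgroup (FAut d D))
    (hmin : IsMinimalPattern d D P) :
    List.TFAE
      [ Finite ↥(gft d D P),
        stP d D P = ⊥,
        Set.BijOn (proj d D) (gft d D P : Set (TAut d)) (P : Set (FAut d D)),
        hausdorffDim d (gft d D P) = 0 ] := by
  have hmin' : (gft d D P).map (proj d D) = P := hmin
  have extract : stP d D P ≠ ⊥ →
      ∃ g : TAut d, g ∈ gft d D P ∧ g ∈ lst d (D - 1) ∧ 2 ≤ d ∧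
        ∃ w₀ : Vertex d, w₀.length ≤ D ∧ (g : Equiv.Perm (Vertex d)) w₀ ≠ w₀ := by
    intro hne
    obtain ⟨a, ha⟩ := Subgroup.ne_bot_iff_exists_ne_one.mp hne
    obtain ⟨g, hg, hproj⟩ := Subgroup.mem_map.mp
      (show (a : FAut d D) ∈ (gft d D P ⊓ lst d (D - 1)).map (proj d D) from a.2)
    have hg1 : g ∈ gft d D P := (Subgroup.mem_inf.mp hg).1
    have hg2 : g ∈ lst d (D - 1) := (Subgroup.mem_inf.mp hg).2
    have hgne : proj d D g ≠ 1 := by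
      rw [hproj]
      intro h
      exact ha (Subtype.ext h)
    have hgD : g ∉ lst d D := fun h => hgne (proj_eq_one_iff.mpr h)
    have hw : ∃ w₀ : Vertex d, w₀.length ≤ D ∧ (g : Equiv.Perm (Vertex d)) w₀ ≠ w₀ := by
      by_contra hcon
      push_neg at hcon
      exact hgD fun v hv => hcon v hv
    obtain ⟨w₀, hw₀l, hw₀⟩ := hw
    have hd2 : 2 ≤ d := by
      by_contra hd'
      haveI hsub := taut_subsingleton (show d ≤ 1 by omega)
      apply hw₀
      rw [Subsingleton.elim g 1, OneMemClass.coe_one, Equiv.Perm.one_apply]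
    exact ⟨g, hg1, hg2, hd2, w₀, hw₀l, hw₀⟩
  have hBpos : ∀ n : ℕ, 2 ≤ d → 1 ≤ n → 0 < Real.log (Nat.card (FAut d n)) := by
    intro n hd2 hn
    apply Real.log_pos
    have h1 := card_faut_ge hd2 n
    have h2 : (n : ℝ) + 1 ≤ (Nat.card (FAut d n) : ℝ) := by exact_mod_cast h1
    have h3 : (1 : ℝ) ≤ (n : ℝ) := by exact_mod_cast hn
    linarith
  tfae_have 1 → 2 := by
    intro h1
    by_contra hne
    obtain ⟨g, hg1, hg2, hd2, w₀, hw₀l, hw₀⟩ := extract hne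
    set z0 : Fin d := ⟨0, by omega⟩ with hz0
    have main : ∀ a b : ℕ, a < b →
        copyE (fun _ => true) a g ≠ copyE (fun _ => true) b g := by
      intro a b hab he
      have hlen : (List.replicate a z0 : Vertex d).length = a := List.length_replicate
      have e2 : ((copyE (fun _ => true) a g : TAut d) : Equiv.Perm (Vertex d))
          (List.replicate a z0 ++ w₀)
          = ((copyE (fun _ => true) b g : TAut d) : Equiv.Perm (Vertex d))
            (List.replicate a z0 ++ w₀) := by rw [he]
      rw [copyE_append hlen, if_pos rfl] at e2
      have e3 : ((copyE (fun _ => true) b g : TAut d) : Equiv.Perm (Vertex d))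
          (List.replicate a z0 ++ w₀) = List.replicate a z0 ++ w₀ := by
        have hmem := copyE_mem_lst hg2 (fun _ => true) b
        exact hmem _ (by rw [List.length_append, hlen]; omega)
      rw [e3] at e2
      exact hw₀ (List.append_cancel_left e2)
    have Finj : Function.Injective (fun m : ℕ =>
        (⟨copyE (fun _ => true) m g, copyE_mem_gft hD hg1 hg2 _ m⟩ : ↥(gft d D P))) := by
      intro a b hab
      simp only [Subtype.mk.injEq] at hab
      by_contra hne'
      rcases Ne.lt_or_gt hne' with h | h
      · exact main a b h hab
      · exact main b a h hab.symm
    haveI := h1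
    haveI := Infinite.of_injective _ Finj
    exact not_finite ↥(gft d D P)
  tfae_have 2 → 3 := by
    intro h2
    refine ⟨?_, ?_, ?_⟩
    · intro g hg
      have : proj d D g ∈ (gft d D P).map (proj d D) := Subgroup.mem_map_of_mem _ hg
      rw [hmin'] at this
      exact this
    · intro a ha b hb hab
      have key : ∀ k : TAut d, k ∈ gft d D P → k ∈ lst d D → k = 1 := by
        intro k hk hkD
        have claim : ∀ u : Vertex d, ∀ k : TAut d, k ∈ gft d D P → k ∈ lst d D →
            sect k u ∈ gft d D P ∧ sect k u ∈ lst d D := by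
          intro u
          induction u with
          | nil => intro k hk hkD; rw [sect_nil]; exact ⟨hk, hkD⟩
          | cons c u IH =>
            intro k hk hkD
            have h1 : sect k [c] ∈ gft d D P := sect_mem_gft hk [c]
            have h2' : sect k [c] ∈ lst d (D - 1) := by
              intro w hw
              rw [sect_apply]
              have : (k : Equiv.Perm (Vertex d)) ([c] ++ w) = [c] ++ w :=
                hkD _ (by rw [List.length_append, List.length_singleton]; omega)
              rw [this, List.drop_left]
            have h3 : proj d D (sect k [c]) ∈ stP d D P :=
              Subgroup.mem_map_of_mem _ (Subgroup.mem_inf.mpr ⟨h1, h2'⟩)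
            rw [h2, Subgroup.mem_bot] at h3
            have h4 : sect k [c] ∈ lst d D := proj_eq_one_iff.mp h3
            have h5 := IH (sect k [c]) h1 h4
            rwa [sect_sect] at h5
        apply taut_ext
        intro l
        induction l using List.reverseRecOn with
        | nil => rw [apply_nil, OneMemClass.coe_one, Equiv.Perm.one_apply]
        | append_singleton y c IH =>
          have hy : (k : Equiv.Perm (Vertex d)) y = y := by
            rw [IH, OneMemClass.coe_one, Equiv.Perm.one_apply]
          have h7 := (claim y k hk hkD).2
          have h8 : ((k : Equiv.Perm (Vertex d)) (y ++ [c])).drop y.length = [c] := by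
            have := h7 [c] (by rw [List.length_singleton]; omega)
            rwa [sect_apply] at this
          rw [OneMemClass.coe_one, Equiv.Perm.one_apply, apply_append k y [c], hy, h8]
      have hk : a⁻¹ * b ∈ gft d D P := mul_mem (inv_mem ha) hb
      have hkD : a⁻¹ * b ∈ lst d D := by
        apply proj_eq_one_iff.mp
        rw [map_mul, map_inv, hab, inv_mul_cancel]
      exact inv_mul_eq_one.mp (key _ hk hkD)
    · intro p hp
      have hp' : p ∈ (gft d D P).map (proj d D) := by rw [hmin']; exact hp
      obtain ⟨x, hx, he⟩ := Subgroup.mem_map.mp hp'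
      exact ⟨x, hx, he⟩
  tfae_have 3 → 1 := by
    intro h3
    exact Finite.of_equiv _ (Set.BijOn.equiv _ h3).symm
  tfae_have 1 → 4 := by
    intro h1
    unfold hausdorffDim
    rcases le_or_gt d 1 with hd | hd
    · haveI hsub : Subsingleton (TAut d) := taut_subsingleton hd
      have hcard : ∀ n : ℕ, Nat.card ↥((gft d D P).map (proj d n)) = 1 := by
        intro n
        have hFA : ∀ x y : FAut d n, x = y := fun x y =>
          QuotientGroup.induction_on x fun gx =>
            QuotientGroup.induction_on y fun gy => by rw [Subsingleton.elim gx gy]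
        exact Nat.card_eq_one_iff_unique.mpr
          ⟨⟨fun x y => Subtype.ext (hFA _ _)⟩, ⟨⟨1, one_mem _⟩⟩⟩
      have hzero : ∀ n : ℕ,
          Real.log (Nat.card ↥((gft d D P).map (proj d n)))
            / Real.log (Nat.card (FAut d n)) = 0 := by
        intro n
        rw [hcard n]
        simp
      simp only [hzero]
      exact Filter.liminf_const 0
    · have hd2 : 2 ≤ d := hd
      haveI := h1
      haveI : Nonempty ↥(gft d D P) := ⟨⟨1, one_mem _⟩⟩
      have hC1 : 1 ≤ Nat.card ↥(gft d D P) := Nat.card_pos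
      have hA : ∀ n : ℕ, Nat.card ↥((gft d D P).map (proj d n)) ≤ Nat.card ↥(gft d D P) := by
        intro n
        apply Nat.card_le_card_of_surjective (f := fun x : ↥(gft d D P) =>
          (⟨proj d n x.1, Subgroup.mem_map_of_mem _ x.2⟩ : ↥((gft d D P).map (proj d n))))
        rintro ⟨y, hy⟩
        obtain ⟨x, hx, he⟩ := Subgroup.mem_map.mp hy
        exact ⟨⟨x, hx⟩, Subtype.ext he⟩
      have hA1 : ∀ n : ℕ, 1 ≤ Nat.card ↥((gft d D P).map (proj d n)) := by
        intro n
        haveI : Nonempty ↥((gft d D P).map (proj d n)) := ⟨⟨1, one_mem _⟩⟩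
        exact Nat.card_pos
      have hB1 : ∀ n : ℕ, 1 ≤ Nat.card (FAut d n) := by
        intro n
        haveI : Nonempty (FAut d n) := ⟨1⟩
        exact Nat.card_pos
      have htend : Tendsto (fun n : ℕ =>
          Real.log (Nat.card ↥(gft d D P)) / Real.log ((n : ℝ) + 1)) atTop (nhds 0) := by
        apply Filter.Tendsto.div_atTop tendsto_const_nhds
        exact Real.tendsto_log_atTop.comp
          (Filter.tendsto_atTop_add_const_right _ 1 tendsto_natCast_atTop_atTop)
      refine Filter.Tendsto.liminf_eq (squeeze_zero' ?_ ?_ htend)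
      · apply Filter.Eventually.of_forall
        intro n
        exact div_nonneg (Real.log_nonneg (by exact_mod_cast hA1 n))
          (Real.log_nonneg (by exact_mod_cast hB1 n))
      · filter_upwards [Filter.eventually_ge_atTop 1] with n hn
        have hlog1 : (0 : ℝ) < Real.log ((n : ℝ) + 1) := by
          apply Real.log_pos
          have : (1 : ℝ) ≤ (n : ℝ) := by exact_mod_cast hn
          linarith
        apply div_le_div₀ (Real.log_nonneg (by exact_mod_cast hC1))
          (Real.log_le_log (by exact_mod_cast hA1 n) (by exact_mod_cast hA n)) hlog1
        apply Real.log_le_log (by positivity)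
        exact_mod_cast card_faut_ge hd2 n
  tfae_have 4 → 2 := by
    intro h4
    by_contra hne
    obtain ⟨g, hg1, hg2, hd2, w₀, hw₀l, hw₀⟩ := extract hne
    have hdR : (2 : ℝ) ≤ (d : ℝ) := by exact_mod_cast hd2
    have hlogd : 0 < Real.log d := Real.log_pos (by linarith)
    set ε : ℝ := Real.log 2 / ((d : ℝ) ^ D * (2 * d * Real.log d)) with hε
    have hεpos : 0 < ε := div_pos (Real.log_pos one_lt_two) (by positivity)
    have himg : ∀ m : ℕ, 2 ^ d ^ m ≤ Nat.card ↥((gft d D P).map (proj d (m + D))) := by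
      intro m
      have hdom : Nat.card ((Fin m → Fin d) → Bool) = 2 ^ d ^ m := by
        rw [Nat.card_fun, Nat.card_fun]
        simp [Nat.card_eq_fintype_card]
      rw [← hdom]
      set bfun : ((Fin m → Fin d) → Bool) → Vertex d → Bool := fun c v =>
        if h : v.length = m then c (fun i => v.get ⟨i.1, h ▸ i.2⟩) else false with hbfun
      apply Nat.card_le_card_of_injective (f := fun c : (Fin m → Fin d) → Bool =>
        (⟨proj d (m + D) (copyE (bfun c) m g),
          Subgroup.mem_map_of_mem _ (copyE_mem_gft hD hg1 hg2 _ m)⟩ :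
          ↥((gft d D P).map (proj d (m + D)))))
      intro c₁ c₂ hc
      funext f
      have hvlen : (List.ofFn f : Vertex d).length = m := List.length_ofFn
      have hgetf : ∀ (c : (Fin m → Fin d) → Bool), bfun c (List.ofFn f) = c f := by
        intro c
        rw [hbfun]
        simp only []
        rw [dif_pos hvlen]
        congr 1
        funext i
        rw [List.get_ofFn]
        congr 1
      have e : proj d (m + D) (copyE (bfun c₁) m g) = proj d (m + D) (copyE (bfun c₂) m g) :=
        congrArg Subtype.val hc
      have e2 := proj_eq_iff.mp e (List.ofFn f ++ w₀)
        (by rw [List.length_append, hvlen]; omega)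
      rw [copyE_append hvlen, copyE_append hvlen, hgetf c₁, hgetf c₂] at e2
      have e3 := List.append_cancel_left e2
      cases hx1 : c₁ f <;> cases hx2 : c₂ f
      · rfl
      · rw [hx1, hx2] at e3
        simp at e3
        exact absurd e3.symm hw₀
      · rw [hx1, hx2] at e3
        simp at e3
        exact absurd e3 hw₀
      · rfl
    have hεle : ∀ᶠ n : ℕ in atTop, ε ≤
        Real.log (Nat.card ↥((gft d D P).map (proj d n)))
          / Real.log (Nat.card (FAut d n)) := by
      filter_upwards [Filter.eventually_ge_atTop (D + 1)] with n hn
      set m := n - D with hm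
      have hnm : n = m + D := by omega
      have hAlow : (2 : ℕ) ^ d ^ m ≤ Nat.card ↥((gft d D P).map (proj d n)) := by
        rw [hnm]; exact himg m
      have hBup : Nat.card (FAut d n) ≤ (d ^ (2 * d)) ^ d ^ n := card_faut_le hd2 n
      have hBlow : 0 < Real.log (Nat.card (FAut d n)) := hBpos n hd2 (by omega)
      have hBcard : 0 < Nat.card (FAut d n) := by
        haveI : Nonempty (FAut d n) := ⟨1⟩
        exact Nat.card_pos
      have hlogA : (d : ℝ) ^ m * Real.log 2 ≤
          Real.log (Nat.card ↥((gft d D P).map (proj d n))) := by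
        have h1 : ((2 : ℕ) ^ d ^ m : ℝ) ≤ (Nat.card ↥((gft d D P).map (proj d n)) : ℝ) := by
          exact_mod_cast hAlow
        have h2 := Real.log_le_log (by positivity) h1
        rw [show ((2 : ℕ) ^ d ^ m : ℝ) = (2 : ℝ) ^ (d ^ m : ℕ) from by push_cast; ring,
          Real.log_pow, Nat.cast_pow] at h2
        exact h2
      have hlogB : Real.log (Nat.card (FAut d n)) ≤ (d : ℝ) ^ n * (2 * d * Real.log d) := by
        have h1 : ((Nat.card (FAut d n)) : ℝ) ≤ (((d ^ (2 * d)) ^ d ^ n : ℕ) : ℝ) := by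
          exact_mod_cast hBup
        have h2 := Real.log_le_log (by exact_mod_cast hBcard) h1
        rw [show (((d ^ (2 * d)) ^ d ^ n : ℕ) : ℝ) = ((d : ℝ) ^ (2 * d : ℕ)) ^ (d ^ n : ℕ)
            from by push_cast; ring, Real.log_pow, Real.log_pow] at h2
        push_cast at h2
        nlinarith [h2]
      have key : ε ≤ ((d : ℝ) ^ m * Real.log 2) / ((d : ℝ) ^ n * (2 * d * Real.log d)) := by
        rw [hε, hnm, pow_add,
          show (d : ℝ) ^ m * (d : ℝ) ^ D * (2 * d * Real.log d)
            = (d : ℝ) ^ m * ((d : ℝ) ^ D * (2 * d * Real.log d)) from by ring,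
          mul_div_mul_left _ _ (ne_of_gt (by positivity : (0:ℝ) < (d : ℝ) ^ m))]
      calc ε ≤ ((d : ℝ) ^ m * Real.log 2) / ((d : ℝ) ^ n * (2 * d * Real.log d)) := key
        _ ≤ ((d : ℝ) ^ m * Real.log 2) / Real.log (Nat.card (FAut d n)) :=
            div_le_div_of_nonneg_left (by positivity) hBlow hlogB
        _ ≤ Real.log (Nat.card ↥((gft d D P).map (proj d n)))
              / Real.log (Nat.card (FAut d n)) :=
            (div_le_div_iff_of_pos_right hBlow).mpr hlogA
    have hbdd : Filter.IsBoundedUnder (· ≤ ·) atTop (fun n : ℕ =>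
        Real.log (Nat.card ↥((gft d D P).map (proj d n)))
          / Real.log (Nat.card (FAut d n))) := by
      refine ⟨1, ?_⟩
      rw [Filter.eventually_map]
      filter_upwards [Filter.eventually_ge_atTop (D + 1)] with n hn
      have hBlow : 0 < Real.log (Nat.card (FAut d n)) := hBpos n hd2 (by omega)
      have hsub : Nat.card ↥((gft d D P).map (proj d n)) ≤ Nat.card (FAut d n) :=
        Nat.card_le_card_of_injective Subtype.val Subtype.coe_injective
      have hApos : (0 : ℝ) < (Nat.card ↥((gft d D P).map (proj d n)) : ℝ) := by
        haveI : Nonempty ↥((gft d D P).map (proj d n)) := ⟨⟨1, one_mem _⟩⟩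
        exact_mod_cast Nat.card_pos
      exact (div_le_one hBlow).mpr (Real.log_le_log hApos (by exact_mod_cast hsub))
    have hfin := Filter.le_liminf_of_le hbdd.isCoboundedUnder_ge hεle
    unfold hausdorffDim at h4
    rw [h4] at hfin
    linarith
  tfae_finish

end TreeFT
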